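/- Let A ∈ ℝ^{N×N}, let σ : Fin N → Fin q be a partition into nonempty clusters that is equitable for A with quotient matrix Q, let F^1, …, F^q and H be m×m real matrices, and let z : Fin N → ℝ^m satisfy z_i = z_j whenever σ i = σ j. Define w : Fin N → ℝ^m by w_i = F^{σ i}·z_i + ∑_{j=1}^N A_{ij} H·z_j. Then w_i = w_j whenever σ i = σ j; that is, the group consensus manifold {z : z_i = z_j whenever σ i = σ j} is invariant under the linear vector field ż_i = F^{σ i} z_i + ∑_j A_{ij} H z_j. -/
import Mathlib


open Matrix Finset

lemma stmt_7_aux (N q m : ℕ) (A : Matrix (Fin N) (Fin N) ℝ) (σ : Fin N → Fin q)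
    (hne : Function.Surjective σ)
    (Q : Matrix (Fin q) (Fin q) ℝ)
    (hQ : ∀ (i : Fin N) (l : Fin q),
      ∑ j ∈ univ.filter (fun j => σ j = l), A i j = Q (σ i) l)
    (H : Matrix (Fin m) (Fin m) ℝ)
    (z : Fin N → (Fin m → ℝ)) (hz : ∀ i j, σ i = σ j → z i = z j)
    (i : Fin N) :
    ∑ j, A i j • H.mulVec (z j)
      = ∑ l, Q (σ i) l • H.mulVec (z (Function.surjInv hne l)) := by
  rw [← Finset.sum_fiberwise (g := σ) (s := univ)
    (f := fun j => A i j • H.mulVec (z j))]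
  refine Finset.sum_congr rfl fun l _ => ?_
  rw [← hQ i l, Finset.sum_smul]
  refine Finset.sum_congr rfl fun j hj => ?_
  simp only [Finset.mem_filter] at hj
  rw [hz j (Function.surjInv hne l) (hj.2.trans (Function.surjInv_eq hne l).symm)]

/-- The group consensus manifold is invariant under the network dynamics with
orbit-identical individual dynamics over an equitable partition. -/
theorem stmt_7 (N q m : ℕ) (A : Matrix (Fin N) (Fin N) ℝ) (σ : Fin N → Fin q)
    (hne : Function.Surjective σ)
    (Q : Matrix (Fin q) (Fin q) ℝ)
    (hQ : ∀ (i : Fin N) (l : Fin q),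
      ∑ j ∈ univ.filter (fun j => σ j = l), A i j = Q (σ i) l)
    (F : Fin q → Matrix (Fin m) (Fin m) ℝ) (H : Matrix (Fin m) (Fin m) ℝ)
    (z : Fin N → (Fin m → ℝ)) (hz : ∀ i j, σ i = σ j → z i = z j)
    (w : Fin N → (Fin m → ℝ))
    (hw : ∀ i, w i = (F (σ i)).mulVec (z i) + ∑ j, A i j • H.mulVec (z j)) :
    ∀ i j, σ i = σ j → w i = w j := by
  intro i j hij
  rw [hw i, hw j, stmt_7_aux N q m A σ hne Q hQ H z hz i,
    stmt_7_aux N q m A σ hne Q hQ H z hz j, hij, hz i j hij]
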